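/- Transfer of solutions from the automorphic Lie system on SL(2,ℝ) to the Riccati equation: let b₀, b₁, b₂ : ℝ → ℝ and set A(t) = b₀(t)M₀ + b₁(t)M₁ + b₂(t)M₂ with M₀ = [[0,1],[0,0]], M₁ = (1/2)·[[1,0],[0,−1]], M₂ = [[0,0],[−1,0]]. Let Y : ℝ → M₂(ℝ) be differentiable with Y'(t) = A(t)Y(t) for all t and Y(0) = I, and write Y(t) = [[α(t), β(t)], [γ(t), δ(t)]]. Fix x₀ ∈ ℝ and let I ⊆ ℝ be an open interval containing 0 on which γ(t)x₀ + δ(t) ≠ 0. Then x(t) = (α(t)x₀ + β(t))/(γ(t)x₀ + δ(t)) satisfies x(0) = x₀ and x'(t) = b₀(t) + b₁(t)x(t) + b₂(t)x(t)² for all t ∈ I. -/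

import Mathlib

attribute [local instance] Matrix.normedAddCommGroup Matrix.normedSpace

/-- `M₀ = [[0,1],[0,0]]`, first element of the chosen basis of `𝔰𝔩(2,ℝ)`. -/
noncomputable def M₀ : Matrix (Fin 2) (Fin 2) ℝ := !![0, 1; 0, 0]

/-- `M₁ = (1/2)·[[1,0],[0,−1]]`, second element of the chosen basis of `𝔰𝔩(2,ℝ)`. -/
noncomputable def M₁ : Matrix (Fin 2) (Fin 2) ℝ := (1 / 2 : ℝ) • !![1, 0; 0, -1]

/-- `M₂ = [[0,0],[−1,0]]`, third element of the chosen basis of `𝔰𝔩(2,ℝ)`. -/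
noncomputable def M₂ : Matrix (Fin 2) (Fin 2) ℝ := !![0, 0; -1, 0]

/-- Transfer of solutions of the automorphic Lie system on `SL(2,ℝ)` to the Riccati
equation: if `Y' = (b₀(t)M₀ + b₁(t)M₁ + b₂(t)M₂) Y`, `Y(0) = I`, and the denominator
`γ(t)x₀ + δ(t)` does not vanish on an open interval `(a, b)` containing `0`, then
`x(t) = (α(t)x₀ + β(t))/(γ(t)x₀ + δ(t))` satisfies `x(0) = x₀` and the Riccati equation
`x' = b₀(t) + b₁(t)x + b₂(t)x²` on `(a, b)`. -/
theorem automorphic_system_transfers_to_riccati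
    (b₀ b₁ b₂ : ℝ → ℝ)
    (Y : ℝ → Matrix (Fin 2) (Fin 2) ℝ)
    (hY : ∀ t : ℝ, HasDerivAt Y ((b₀ t • M₀ + b₁ t • M₁ + b₂ t • M₂) * Y t) t)
    (hY0 : Y 0 = 1)
    (x₀ a b : ℝ) (h0 : (0 : ℝ) ∈ Set.Ioo a b)
    (hden : ∀ t ∈ Set.Ioo a b, Y t 1 0 * x₀ + Y t 1 1 ≠ 0) :
    (Y 0 0 0 * x₀ + Y 0 0 1) / (Y 0 1 0 * x₀ + Y 0 1 1) = x₀ ∧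
      ∀ t ∈ Set.Ioo a b,
        HasDerivAt (fun s => (Y s 0 0 * x₀ + Y s 0 1) / (Y s 1 0 * x₀ + Y s 1 1))
          (b₀ t + b₁ t * ((Y t 0 0 * x₀ + Y t 0 1) / (Y t 1 0 * x₀ + Y t 1 1)) +
            b₂ t * ((Y t 0 0 * x₀ + Y t 0 1) / (Y t 1 0 * x₀ + Y t 1 1)) ^ 2) t := by
  have hE : ∀ (i j : Fin 2) (t : ℝ),
      HasDerivAt (fun s => Y s i j) (((b₀ t • M₀ + b₁ t • M₁ + b₂ t • M₂) * Y t) i j) t := by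
    intro i j t
    have := ((Matrix.entryLinearMap ℝ ℝ i j).toContinuousLinearMap.hasFDerivAt).comp_hasDerivAt
      t (hY t)
    exact this
  constructor
  · simp [hY0, Matrix.one_apply]
  · intro t ht
    have hN : HasDerivAt (fun s => Y s 0 0 * x₀ + Y s 0 1)
        (b₁ t / 2 * (Y t 0 0 * x₀ + Y t 0 1) + b₀ t * (Y t 1 0 * x₀ + Y t 1 1)) t := by
      have h1 := (hE 0 0 t).mul_const x₀
      have h2 := hE 0 1 t
      have := h1.add h2
      convert this using 1
      · rfl
      · rfl
      · rfl
      simp [M₀, M₁, M₂, Matrix.mul_apply, Fin.sum_univ_two]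
      ring
    have hD : HasDerivAt (fun s => Y s 1 0 * x₀ + Y s 1 1)
        (-(b₂ t) * (Y t 0 0 * x₀ + Y t 0 1) - b₁ t / 2 * (Y t 1 0 * x₀ + Y t 1 1)) t := by
      have h1 := (hE 1 0 t).mul_const x₀
      have h2 := hE 1 1 t
      have := h1.add h2
      convert this using 1
      · rfl
      · rfl
      · rfl
      simp [M₀, M₁, M₂, Matrix.mul_apply, Fin.sum_univ_two]
      ring
    have hd := hden t ht
    have := hN.div hD hd
    convert this using 1
    · rfl
    · rfl
    · rfl
    have hd2 : x₀ * Y t 1 0 + Y t 1 1 ≠ 0 := by rwa [mul_comm]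
    field_simp
    ring
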